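/- arXiv:1406.5017 — 2 statements merged into one kernel-verified Lean document; each statement's English description precedes it below -/
import Mathlib

section
/- Let σ be an antisymmetric invertible 2n×2n complex matrix, α, β, α', β' ∈ ℂ^{2n} with βᵀσα = β'ᵀσα = 0 and αᵀσα = 0 (automatic). Set L₋₁ = (αβᵀ + βαᵀ)σ and L'₋₁ = (αβ'ᵀ + β'αᵀ)σ. Then [L₋₁, L'₋₁] = ν·ααᵀσ·c for some scalar, i.e., the commutator of two such rank-≤2 symplectic matrices lies in the one-dimensional space ℂ·ααᵀσ. Precisely, [L₋₁, L'₋₁] = (βᵀσβ' − β'ᵀσβ)·ααᵀσ = 2(βᵀσβ')·ααᵀσ. -/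
open Matrix

lemma vvmul {m : Type*} [Fintype m] (a b c d : m → ℂ) :
    vecMulVec a b * vecMulVec c d = (dotProduct b c) • vecMulVec a d := by
  ext i j
  simp only [mul_apply, vecMulVec_apply, Matrix.smul_apply, smul_eq_mul, dotProduct, Finset.sum_mul]
  exact Finset.sum_congr rfl (fun k _ => by ring)

lemma mulvv {m : Type*} [Fintype m] (A : Matrix m m ℂ) (c d : m → ℂ) :
    A * vecMulVec c d = vecMulVec (A.mulVec c) d := by
  ext i j
  simp only [mul_apply, vecMulVec_apply, mulVec, dotProduct, Finset.sum_mul]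
  exact Finset.sum_congr rfl (fun k _ => by ring)

lemma antisym_dot {m : Type*} [Fintype m] (A : Matrix m m ℂ) (h : A.transpose = -A)
    (x y : m → ℂ) : dotProduct x (A.mulVec y) = - dotProduct y (A.mulVec x) := by
  rw [dotProduct_mulVec, ← vecMul_transpose, h]
  simp [dotProduct_comm, Matrix.vecMul_neg]

lemma prod_eval {m : Type*} [Fintype m] (σ : Matrix m m ℂ) (α β β' : m → ℂ)
    (hβ : dotProduct β (σ.mulVec α) = 0) (hαα : dotProduct α (σ.mulVec α) = 0) :
    ((vecMulVec α β + vecMulVec β α) * σ) * ((vecMulVec α β' + vecMulVec β' α) * σ) =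
      (dotProduct β (σ.mulVec β')) • (vecMulVec α α * σ)
        + (dotProduct α (σ.mulVec β')) • (vecMulVec β α * σ) := by
  have e : ((vecMulVec α β + vecMulVec β α) * σ) * ((vecMulVec α β' + vecMulVec β' α) * σ)
      = (vecMulVec α β * (σ * vecMulVec α β') + vecMulVec α β * (σ * vecMulVec β' α)
          + vecMulVec β α * (σ * vecMulVec α β')
          + vecMulVec β α * (σ * vecMulVec β' α)) * σ := by noncomm_ring
  rw [e, mulvv σ α β', mulvv σ β' α, vvmul, vvmul, vvmul, vvmul, hβ, hαα]
  simp [add_mul, smul_mul_assoc]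

/-- Let `σ` be antisymmetric invertible, `α, β, β' ∈ ℂ^{2n}` with
`βᵀσα = 0` and `β'ᵀσα = 0` (and `αᵀσα = 0` automatically).  For
`L₋₁ = (αβᵀ + βαᵀ)σ` and `L'₋₁ = (αβ'ᵀ + β'αᵀ)σ` one has
`[L₋₁, L'₋₁] = 2(βᵀσβ') · ααᵀσ`, so the commutator lies in `ℂ · ααᵀσ`. -/
theorem sp_simple_pole_bracket
    (n : ℕ) (σ : Matrix (Fin (2 * n)) (Fin (2 * n)) ℂ)
    (hσ : σ.transpose = -σ) (hinv : IsUnit σ)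
    (α β β' : Fin (2 * n) → ℂ)
    (hβ : dotProduct β (σ.mulVec α) = 0)
    (hβ' : dotProduct β' (σ.mulVec α) = 0) :
    ⁅(Matrix.vecMulVec α β + Matrix.vecMulVec β α) * σ,
      (Matrix.vecMulVec α β' + Matrix.vecMulVec β' α) * σ⁆ =
    (2 * dotProduct β (σ.mulVec β')) • (Matrix.vecMulVec α α * σ) := by
  have hαα : dotProduct α (σ.mulVec α) = 0 := by
    have h := antisym_dot σ hσ α α
    linear_combination h / 2
  have hαβ : dotProduct α (σ.mulVec β) = 0 := by
    rw [antisym_dot σ hσ, hβ, neg_zero]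
  have hαβ' : dotProduct α (σ.mulVec β') = 0 := by
    rw [antisym_dot σ hσ, hβ', neg_zero]
  have hββ' : dotProduct β' (σ.mulVec β) = - dotProduct β (σ.mulVec β') :=
    antisym_dot σ hσ β' β
  rw [Ring.lie_def, prod_eval σ α β β' hβ hαα, prod_eval σ α β' β hβ' hαα,
    hαβ, hαβ', hββ']
  simp only [zero_smul, add_zero]
  rw [← sub_smul]
  ring_nf
end

section
/- Let L, L' ∈ g ⊗ ℂ((z)) be formal Laurent series L = Σ_{p ≥ -k} L_p z^p, L' = Σ_{q ≥ -k} L'_q z^q with L_p, L'_q in the filtration subspaces F_p, F_q of a ℤ-graded semisimple Lie algebra g with invariant form ⟨·,·⟩, and let ω = (H z^{-1} + Σ_{l≥0} ω_l z^l) dz with ω_l ∈ g_0 and H the grading element. Then the formal 1-form ⟨L, dL' − [ω, L']⟩ has no terms z^m dz with m < 0; i.e., it is a formal power series in z times dz (holomorphic at z = 0). -/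
section Aux

variable {g : Type*} [LieRing g] [LieAlgebra ℂ g]
variable (H : g) (B : LinearMap.BilinForm ℂ g)

/-- Eigenvectors of `ad H` with eigenvalues `a, b`, `a + b ≠ 0`, are `B`-orthogonal. -/
lemma aux_eig_pair (hBinv : ∀ X Y Z : g, B ⁅X, Y⁆ Z = B X ⁅Y, Z⁆)
    {a b : ℤ} (hab : a + b ≠ 0) {X Y : g}
    (hX : X ∈ Module.End.eigenspace (LieAlgebra.ad ℂ g H) (a : ℂ))
    (hY : Y ∈ Module.End.eigenspace (LieAlgebra.ad ℂ g H) (b : ℂ)) : B X Y = 0 := by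
  rw [Module.End.mem_eigenspace_iff] at hX hY
  have hX' : ⁅H, X⁆ = (a : ℂ) • X := by simpa [LieAlgebra.ad_apply] using hX
  have hY' : ⁅H, Y⁆ = (b : ℂ) • Y := by simpa [LieAlgebra.ad_apply] using hY
  have h1 : B ⁅X, H⁆ Y = B X ⁅H, Y⁆ := hBinv X H Y
  have h2 : ⁅X, H⁆ = -((a : ℂ) • X) := by rw [← lie_skew X H, hX']
  rw [h2, hY'] at h1
  simp only [map_neg, map_smul, LinearMap.neg_apply, LinearMap.smul_apply, smul_eq_mul] at h1
  have hz : ((a : ℂ) + b) * B X Y = 0 := by linear_combination -h1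
  have hne : ((a : ℂ) + b) ≠ 0 := by
    have h3 : ((a + b : ℤ) : ℂ) ≠ 0 := Int.cast_ne_zero.mpr hab
    push_cast at h3; exact h3
  exact (mul_eq_zero.mp hz).resolve_left hne

variable (F : ℤ → Submodule ℂ g)

/-- Each eigenspace sits inside the corresponding filtration piece. -/
lemma aux_eig_le
    (hF : ∀ p, F p = ⨆ q ≤ p, Module.End.eigenspace (LieAlgebra.ad ℂ g H) (q : ℂ))
    {b q : ℤ} (hbq : b ≤ q) :
    Module.End.eigenspace (LieAlgebra.ad ℂ g H) (b : ℂ) ≤ F q := by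
  rw [hF q]
  exact le_iSup₂ (f := fun b (_ : b ≤ q) =>
    Module.End.eigenspace (LieAlgebra.ad ℂ g H) (b : ℂ)) b hbq

/-- Orthogonality of filtration pieces: `F p ⟂ F q` when `p + q < 0`. -/
lemma aux_orth (hBinv : ∀ X Y Z : g, B ⁅X, Y⁆ Z = B X ⁅Y, Z⁆)
    (hF : ∀ p, F p = ⨆ q ≤ p, Module.End.eigenspace (LieAlgebra.ad ℂ g H) (q : ℂ))
    {p q : ℤ} (hpq : p + q < 0) {X Y : g} (hX : X ∈ F p) (hY : Y ∈ F q) :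
    B X Y = 0 := by
  have key : F p ≤ ⨅ Y : (F q), LinearMap.ker (B.flip (Y : g)) := by
    rw [hF p]
    refine iSup_le fun a => iSup_le fun hap X hXa => ?_
    rw [Submodule.mem_iInf]
    rintro ⟨Y, hY⟩
    have key2 : F q ≤ LinearMap.ker (B X) := by
      rw [hF q]
      refine iSup_le fun b => iSup_le fun hbq Y hYb => ?_
      rw [LinearMap.mem_ker]
      exact aux_eig_pair H B hBinv (by omega) hXa hYb
    simpa [LinearMap.mem_ker] using key2 hY
  have h := key hX
  rw [Submodule.mem_iInf] at h
  simpa [LinearMap.mem_ker] using h ⟨Y, hY⟩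

/-- `B X ⁅H, Y⁆ = q • B X Y` for `X ∈ F p`, `Y ∈ F q`, `p + q ≤ 0`. -/
lemma aux_H (hBinv : ∀ X Y Z : g, B ⁅X, Y⁆ Z = B X ⁅Y, Z⁆)
    (hF : ∀ p, F p = ⨆ q ≤ p, Module.End.eigenspace (LieAlgebra.ad ℂ g H) (q : ℂ))
    {p q : ℤ} (hpq : p + q ≤ 0) {X Y : g} (hX : X ∈ F p) (hY : Y ∈ F q) :
    B X ⁅H, Y⁆ = (q : ℂ) * B X Y := by
  set φ : g →ₗ[ℂ] ℂ :=
    (B X).comp (LieAlgebra.ad ℂ g H : g →ₗ[ℂ] g) - (q : ℂ) • (B X) with hφ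
  have key : F q ≤ LinearMap.ker φ := by
    rw [hF q]
    refine iSup_le fun b => iSup_le fun hbq Y hYb => ?_
    rw [LinearMap.mem_ker]
    have hY' : (LieAlgebra.ad ℂ g H) Y = (b : ℂ) • Y :=
      Module.End.mem_eigenspace_iff.mp hYb
    have : φ Y = ((b : ℂ) - q) * B X Y := by
      simp [hφ, hY', mul_comm]; ring
    rw [this]
    rcases eq_or_lt_of_le hbq with h | h
    · rw [h]; ring
    · have hz : B X Y = 0 :=
        aux_orth H B F hBinv hF (by omega) hX (aux_eig_le H F hF (le_refl b) hYb)
      rw [hz]; ring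
  have h := key hY
  rw [LinearMap.mem_ker] at h
  have : φ Y = B X ⁅H, Y⁆ - (q : ℂ) * B X Y := by
    simp [hφ, LieAlgebra.ad_apply]
  rw [this] at h
  linear_combination h
  
/-- Bracketing with an element of `g₀` preserves the filtration. -/
lemma aux_omega
    (hF : ∀ p, F p = ⨆ q ≤ p, Module.End.eigenspace (LieAlgebra.ad ℂ g H) (q : ℂ))
    {q : ℤ} {w Y : g}
    (hw : w ∈ Module.End.eigenspace (LieAlgebra.ad ℂ g H) (0 : ℂ))
    (hY : Y ∈ F q) : ⁅w, Y⁆ ∈ F q := by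
  have hw' : ⁅H, w⁆ = 0 := by
    have := Module.End.mem_eigenspace_iff.mp hw
    simpa [LieAlgebra.ad_apply] using this
  have key : F q ≤ Submodule.comap (LieAlgebra.ad ℂ g w : g →ₗ[ℂ] g) (F q) := by
    rw [hF q]
    refine iSup_le fun b => iSup_le fun hbq Y hYb => ?_
    have hY' : ⁅H, Y⁆ = (b : ℂ) • Y := by
      simpa [LieAlgebra.ad_apply] using Module.End.mem_eigenspace_iff.mp hYb
    have hmem : ⁅w, Y⁆ ∈ Module.End.eigenspace (LieAlgebra.ad ℂ g H) (b : ℂ) := by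
      rw [Module.End.mem_eigenspace_iff]
      have : ⁅H, ⁅w, Y⁆⁆ = (b : ℂ) • ⁅w, Y⁆ := by
        rw [leibniz_lie, hw', hY']
        simp
      simpa [LieAlgebra.ad_apply] using this
    refine Submodule.mem_comap.mpr ?_
    have h' := aux_eig_le H F hF hbq hmem
    rw [hF q] at h'
    simpa [LieAlgebra.ad_apply] using h'
  simpa [LieAlgebra.ad_apply] using key hY

end Aux

/-- Theorem 3.1, 1°, local form: Let `g` be a finite-dimensional semisimple
complex Lie algebra graded by the eigenspaces `g_p` of `ad H` (depth `k`), with filtration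
`F p = ⨁_{q ≤ p} g_q` and invariant symmetric bilinear form `B`.  Let
`L = Σ_{p} L_p z^p`, `L' = Σ_{q} L'_q z^q` be formal Laurent series with `L_p ∈ F_p`,
`L'_q ∈ F_q`, and let `ω = (H z^{-1} + Σ_{l ≥ 0} ω_l z^l) dz` with `ω_l ∈ g_0`.
Then the formal 1-form `⟨L, dL' − [ω, L']⟩` has no terms `z^m dz` with `m < 0`, i.e. its
coefficient at `z^m dz`, namely
`Σ_p ((m+1−p)·B(L_p, L'_{m+1−p}) − Σ_l B(L_p, [ω_l, L'_{m−p−l}]))`, vanishes for `m < 0`. -/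
theorem one_form_holomorphic_at_gamma
    {g : Type*} [LieRing g] [LieAlgebra ℂ g] [FiniteDimensional ℂ g]
    [LieAlgebra.IsSemisimple ℂ g]
    (H : g) (k : ℕ)
    (hdepth : ∀ r : ℤ, (k : ℤ) < |r| →
      Module.End.eigenspace (LieAlgebra.ad ℂ g H) (r : ℂ) = ⊥)
    (B : LinearMap.BilinForm ℂ g)
    (hBsymm : ∀ X Y : g, B X Y = B Y X)
    (hBinv : ∀ X Y Z : g, B ⁅X, Y⁆ Z = B X ⁅Y, Z⁆)
    (F : ℤ → Submodule ℂ g)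
    (hF : ∀ p, F p = ⨆ q ≤ p, Module.End.eigenspace (LieAlgebra.ad ℂ g H) (q : ℂ))
    (L L' : ℤ → g) (hL : ∀ p, L p ∈ F p) (hL' : ∀ q, L' q ∈ F q)
    (ω : ℤ → g)
    (hωres : ω (-1) = H)
    (hω0 : ∀ l : ℤ, 0 ≤ l → ω l ∈ Module.End.eigenspace (LieAlgebra.ad ℂ g H) (0 : ℂ))
    (hωneg : ∀ l : ℤ, l < -1 → ω l = 0) :
    ∀ m : ℤ, m < 0 →
      (∑ p ∈ Finset.Icc (-(k : ℤ)) (m + 1 + k),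
        (((m + 1 - p : ℤ) : ℂ) * B (L p) (L' (m + 1 - p)) -
          ∑ l ∈ Finset.Icc (-1 : ℤ) (m - p + k), B (L p) ⁅ω l, L' (m - p - l)⁆)) = 0 := by
  intro m hm
  apply Finset.sum_eq_zero
  intro p hp
  rw [Finset.mem_Icc] at hp
  have hsplit : Finset.Icc (-1 : ℤ) (m - p + k) = insert (-1) (Finset.Icc 0 (m - p + k)) := by
    ext x
    simp only [Finset.mem_Icc, Finset.mem_insert]
    omega
  rw [hsplit, Finset.sum_insert (by simp)]
  have h2 : ∑ l ∈ Finset.Icc (0 : ℤ) (m - p + k), B (L p) ⁅ω l, L' (m - p - l)⁆ = 0 := by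
    apply Finset.sum_eq_zero
    intro l hl
    rw [Finset.mem_Icc] at hl
    have hb : ⁅ω l, L' (m - p - l)⁆ ∈ F (m - p - l) :=
      aux_omega H F hF (hω0 l hl.1) (hL' _)
    exact aux_orth H B F hBinv hF (by omega : p + (m - p - l) < 0) (hL p) hb
  rw [hωres, h2, add_zero]
  have hidx : m - p - (-1) = m + 1 - p := by ring
  rw [hidx]
  have h1 : B (L p) ⁅H, L' (m + 1 - p)⁆ = ((m + 1 - p : ℤ) : ℂ) * B (L p) (L' (m + 1 - p)) :=
    aux_H H B F hBinv hF (by omega : p + (m + 1 - p) ≤ 0) (hL p) (hL' _)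
  rw [h1]
  ring
end
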